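/- Let λ* ≥ 0 and ν* ≥ 0, and let π*(x) = 1{τ(x) − λ*·c(x) + ν* ≥ 0}. If π* is feasible, i.e. ∫ π* c dμ ≤ C and ∫ π* dμ ≥ ρ, and the complementary slackness conditions λ*·(∫ π* c dμ − C) = 0 and ν*·(ρ − ∫ π* dμ) = 0 hold, then for every feasible policy π one has ∫ π τ dμ ≤ ∫ π* τ dμ; that is, the affine threshold policy π* maximizes welfare over the feasible set. -/

import Mathlib

open MeasureTheory

/-- If the affine threshold policy π*(x) = 1{τ(x) − λ* c(x) + ν* ≥ 0}
is feasible and satisfies complementary slackness, then it maximizes welfare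
∫ π τ dμ over all feasible measurable binary policies. -/
theorem threshold_policy_optimality
    {𝒳 : Type*} [MeasurableSpace 𝒳] (μ : Measure 𝒳) [IsProbabilityMeasure μ]
    (τ c : 𝒳 → ℝ) (hτm : Measurable τ) (hτi : Integrable τ μ)
    (hcm : Measurable c) (hci : Integrable c μ) (hcpos : ∀ x, 0 < c x)
    (C ρ : ℝ) (hC : 0 < C) (hρ : ρ ∈ Set.Ioo (0 : ℝ) 1)
    (lam ν : ℝ) (hlam : 0 ≤ lam) (hν : 0 ≤ ν)
    (πs : 𝒳 → ℝ)
    (hπs : πs = fun x => if 0 ≤ τ x - lam * c x + ν then (1 : ℝ) else 0)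
    (hfeas₁ : (∫ x, πs x * c x ∂μ) ≤ C)
    (hfeas₂ : ρ ≤ ∫ x, πs x ∂μ)
    (hcs₁ : lam * ((∫ x, πs x * c x ∂μ) - C) = 0)
    (hcs₂ : ν * (ρ - ∫ x, πs x ∂μ) = 0) :
    ∀ π : 𝒳 → ℝ, Measurable π → (∀ x, π x = 0 ∨ π x = 1) →
      (∫ x, π x * c x ∂μ) ≤ C → ρ ≤ (∫ x, π x ∂μ) →
      (∫ x, τ x * π x ∂μ) ≤ ∫ x, τ x * πs x ∂μ := by
  intro π hπm hπ01 hπC hπρ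
  -- basic facts about πs and π
  have hπs01 : ∀ x, πs x = 0 ∨ πs x = 1 := by
    intro x; rw [hπs]; dsimp only; split <;> simp
  have hπsm : Measurable πs := by
    rw [hπs]
    exact Measurable.ite (measurableSet_le measurable_const
      (((hτm.sub (hcm.const_mul lam)).add measurable_const))) measurable_const
      measurable_const
  have bd : ∀ (f : 𝒳 → ℝ), (∀ x, f x = 0 ∨ f x = 1) → ∀ x, ‖f x‖ ≤ 1 := by
    intro f hf x; rcases hf x with h | h <;> simp [h]
  have nn : ∀ (f : 𝒳 → ℝ), (∀ x, f x = 0 ∨ f x = 1) → ∀ x, 0 ≤ f x := by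
    intro f hf x; rcases hf x with h | h <;> simp [h]
  have le1 : ∀ (f : 𝒳 → ℝ), (∀ x, f x = 0 ∨ f x = 1) → ∀ x, f x ≤ 1 := by
    intro f hf x; rcases hf x with h | h <;> simp [h]
  set g : 𝒳 → ℝ := fun x => τ x - lam * c x + ν with hg
  have hgi : Integrable g μ := (hτi.sub (hci.const_mul lam)).add (integrable_const ν)
  have hmul : ∀ (f : 𝒳 → ℝ), Measurable f → (∀ x, f x = 0 ∨ f x = 1) →
      Integrable (fun x => f x * g x) μ := by
    intro f hfm hf01
    exact hgi.bdd_mul hfm.aestronglyMeasurable (ae_of_all _ (bd f hf01))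
  -- pointwise inequality
  have hpt : ∀ x, π x * g x ≤ πs x * g x := by
    intro x
    by_cases h : 0 ≤ g x
    · have : πs x = 1 := by rw [hπs]; simp [hg] at h ⊢; exact h
      rw [this, one_mul]
      calc π x * g x ≤ 1 * g x := mul_le_mul_of_nonneg_right (le1 π hπ01 x) h
        _ = g x := one_mul _
    · have : πs x = 0 := by
        rw [hπs]; simp [hg] at h; simp [not_le.mpr h]
      rw [this, zero_mul]
      exact mul_nonpos_of_nonneg_of_nonpos (nn π hπ01 x) (le_of_not_ge h)
  have hint : (∫ x, π x * g x ∂μ) ≤ ∫ x, πs x * g x ∂μ :=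
    integral_mono (hmul π hπm hπ01) (hmul πs hπsm hπs01) hpt
  -- expand both sides
  have hπτi : Integrable (fun x => π x * τ x) μ :=
    hτi.bdd_mul hπm.aestronglyMeasurable (ae_of_all _ (bd π hπ01))
  have hπci : Integrable (fun x => π x * c x) μ :=
    hci.bdd_mul hπm.aestronglyMeasurable (ae_of_all _ (bd π hπ01))
  have hπi : Integrable π μ := by
    have : Integrable (fun x => π x * (1:ℝ)) μ :=
      (integrable_const (1:ℝ)).bdd_mul hπm.aestronglyMeasurable (ae_of_all _ (bd π hπ01))
    simpa using this
  have hπsτi : Integrable (fun x => πs x * τ x) μ :=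
    hτi.bdd_mul hπsm.aestronglyMeasurable (ae_of_all _ (bd πs hπs01))
  have hπsci : Integrable (fun x => πs x * c x) μ :=
    hci.bdd_mul hπsm.aestronglyMeasurable (ae_of_all _ (bd πs hπs01))
  have hπsi : Integrable πs μ := by
    have : Integrable (fun x => πs x * (1:ℝ)) μ :=
      (integrable_const (1:ℝ)).bdd_mul hπsm.aestronglyMeasurable (ae_of_all _ (bd πs hπs01))
    simpa using this
  have expand : ∀ (f : 𝒳 → ℝ), Integrable (fun x => f x * τ x) μ →
      Integrable (fun x => f x * c x) μ → Integrable f μ →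
      (∫ x, f x * g x ∂μ) =
        (∫ x, f x * τ x ∂μ) - lam * (∫ x, f x * c x ∂μ) + ν * (∫ x, f x ∂μ) := by
    intro f h1 h2 h3
    have : (∫ x, f x * g x ∂μ) =
        ∫ x, (f x * τ x - lam * (f x * c x) + ν * f x) ∂μ := by
      congr 1; funext x; simp [hg]; ring
    have hsub : Integrable (fun x => f x * τ x - lam * (f x * c x)) μ :=
      h1.sub (h2.const_mul lam)
    have hcm' : Integrable (fun x => ν * f x) μ := h3.const_mul ν
    rw [this, integral_add hsub hcm', integral_sub h1 (h2.const_mul lam),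
      integral_const_mul, integral_const_mul]
  rw [expand π hπτi hπci hπi, expand πs hπsτi hπsci hπsi] at hint
  have e1 : (∫ x, τ x * π x ∂μ) = ∫ x, π x * τ x ∂μ := by
    congr 1; funext x; ring
  have e2 : (∫ x, τ x * πs x ∂μ) = ∫ x, πs x * τ x ∂μ := by
    congr 1; funext x; ring
  rw [e1, e2]
  nlinarith [mul_le_mul_of_nonneg_left hπC hlam, mul_le_mul_of_nonneg_left hπρ hν]
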